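/- Let n ≥ 1 and let x_j = cos(jπ/n) for j = 0, 1, …, n be the Chebyshev points. Then for each ℓ with 0 ≤ ℓ ≤ n, the product W_ℓ = ∏_{j=0, j≠ℓ}^{n} (x_ℓ − x_j) equals (−1)^ℓ · 2n/2^{n−1} if ℓ = 0 or ℓ = n, and equals (−1)^ℓ · n/2^{n−1} otherwise. -/

import Mathlib

open Finset Polynomial

private lemma range_prod_eq (m : ℕ) (hm : 0 < m) :
    (X : ℂ[X]) ^ m - 1 = ∏ k ∈ range m, (X - C (Complex.exp (2 * Real.pi * Complex.I / m) ^ k)) := by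
  set ω := Complex.exp (2 * Real.pi * Complex.I / m) with hω
  have hprim : IsPrimitiveRoot ω m := Complex.isPrimitiveRoot_exp m hm.ne'
  rw [X_pow_sub_one_eq_prod hm hprim]
  refine (Finset.prod_nbij (fun k => ω ^ k) (fun k hk => ?_) (fun a ha b hb hab => ?_) (fun ζ hζ => ?_) (fun _ _ => rfl)).symm
  · exact (Polynomial.mem_nthRootsFinset hm (1:ℂ)).2 (by rw [← pow_mul, mul_comm, pow_mul, hprim.pow_eq_one, one_pow])
  · exact hprim.pow_inj (mem_range.1 (mem_coe.1 ha)) (mem_range.1 (mem_coe.1 hb)) hab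
  · haveI : NeZero m := ⟨hm.ne'⟩
    obtain ⟨i, hi, he⟩ := hprim.eq_pow_of_pow_eq_one ((Polynomial.mem_nthRootsFinset hm (1:ℂ)).1 hζ)
    exact ⟨i, mem_coe.2 (mem_range.2 hi), he⟩

private lemma prod_eq_geom (m : ℕ) (hm : 0 < m) :
    (∏ k ∈ Ico 1 m, ((X : ℂ[X]) - C (Complex.exp (2 * Real.pi * Complex.I / m) ^ k)))
      = ∑ i ∈ range m, (X:ℂ[X]) ^ i := by
  have key := range_prod_eq m hm
  have h1 : ((X:ℂ[X]) - 1) ≠ 0 := by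
    have := Polynomial.X_sub_C_ne_zero (R := ℂ) (1 : ℂ)
    simpa using this
  apply mul_left_cancel₀ h1
  have : ∏ k ∈ range m, ((X:ℂ[X]) - C (Complex.exp (2 * Real.pi * Complex.I / m) ^ k))
      = ((X:ℂ[X]) - 1) * ∏ k ∈ Ico 1 m, ((X:ℂ[X]) - C (Complex.exp (2 * Real.pi * Complex.I / m) ^ k)) := by
    rw [range_eq_Ico, Finset.prod_eq_prod_Ico_succ_bot hm]
    simp
  rw [← this, ← key, ← geom_sum_mul ((X:ℂ[X])) m, mul_comm]

private lemma root_prod (m : ℕ) (hm : 0 < m) :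
    ∏ k ∈ Ico 1 m, (1 - Complex.exp (2 * Real.pi * Complex.I / m) ^ k) = m := by
  have := congrArg (Polynomial.eval (1:ℂ)) (prod_eq_geom m hm)
  simpa [Polynomial.eval_prod] using this

private lemma abs_one_sub_exp (θ : ℝ) (h0 : 0 ≤ θ/2) (h1 : θ/2 ≤ Real.pi) :
    ‖(1 - Complex.exp (θ * Complex.I))‖ = 2 * Real.sin (θ/2) := by
  rw [Complex.exp_mul_I]
  have he : (1 : ℂ) - (Complex.cos θ + Complex.sin θ * Complex.I) = Complex.mk (1 - Real.cos θ) (- Real.sin θ) := by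
    apply Complex.ext <;>
      simp [Complex.cos_ofReal_re, Complex.sin_ofReal_re, Complex.cos_ofReal_im, Complex.sin_ofReal_im]
  rw [he, Complex.norm_def, Complex.normSq_mk]
  have hs : 0 ≤ Real.sin (θ/2) := Real.sin_nonneg_of_nonneg_of_le_pi h0 h1
  have hc : Real.cos θ = 1 - 2 * Real.sin (θ/2)^2 := by
    have h2 : Real.cos (2 * (θ/2)) = 2 * Real.cos (θ/2)^2 - 1 := Real.cos_two_mul _
    have h3 := Real.sin_sq_add_cos_sq (θ/2)
    have h4 : 2 * (θ/2) = θ := by ring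
    rw [h4] at h2
    nlinarith
  have hsq : (1 - Real.cos θ) * (1 - Real.cos θ) + (-Real.sin θ) * (-Real.sin θ)
      = (2 * Real.sin (θ/2))^2 := by
    have := Real.sin_sq_add_cos_sq θ
    nlinarith
  rw [hsq, Real.sqrt_sq (by positivity)]

private lemma sin_prod (m : ℕ) (hm : 0 < m) :
    ∏ k ∈ Ico 1 m, (2 * Real.sin (k * Real.pi / m)) = m := by
  have h := congrArg (fun z : ℂ => ‖z‖) (root_prod m hm)
  rw [norm_prod] at h
  have habs : ∀ k ∈ Ico 1 m,
      ‖(1 - Complex.exp (2 * Real.pi * Complex.I / m) ^ k)‖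
        = 2 * Real.sin (k * Real.pi / m) := by
    intro k hk
    rw [mem_Ico] at hk
    have hme : (m:ℂ) ≠ 0 := Nat.cast_ne_zero.2 hm.ne'
    have hexp : Complex.exp (2 * Real.pi * Complex.I / m) ^ k
        = Complex.exp ((2 * Real.pi * k / m : ℝ) * Complex.I) := by
      rw [← Complex.exp_nat_mul]
      push_cast
      ring_nf
    rw [hexp]
    have h0 : 0 ≤ (2 * Real.pi * k / m) / 2 := by positivity
    have h1 : (2 * Real.pi * k / m) / 2 ≤ Real.pi := by
      have hk1 : (k:ℝ) ≤ m := by exact_mod_cast hk.2.le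
      have hmpos : (0:ℝ) < m := by exact_mod_cast hm
      rw [div_div, div_le_iff₀ (by positivity : (0:ℝ) < m * 2)]
      nlinarith [Real.pi_pos]
    have := abs_one_sub_exp (2 * Real.pi * k / m) h0 h1
    rw [this]
    congr 1
    ring
  rw [Finset.prod_congr rfl habs, Complex.norm_natCast] at h
  exact h


-- s notation
private noncomputable def ss (n k : ℕ) : ℝ := Real.sin ((k:ℝ) * Real.pi / (2*n))

private lemma sP (n : ℕ) (hn : 1 ≤ n)
    (base : ∏ k ∈ Ico 1 (2*n), (2 * Real.sin ((k:ℝ) * Real.pi / (2*n))) = (2*n:ℕ)) :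
    ∏ k ∈ Ioc 0 (2*n-1), ss n k = 2*n / 2^(2*n-1) := by
  rw [Finset.prod_mul_distrib, Finset.prod_const, Nat.card_Ico] at base
  have hIoc : Ico 1 (2*n) = Ioc 0 (2*n-1) := by ext x; simp; omega
  rw [hIoc] at base
  push_cast at base
  unfold ss
  rw [eq_div_iff (by positivity)]
  linarith [base]

private lemma s_refl (n k : ℕ) (hk : k ≤ 2*n) : ss n (2*n - k) = ss n k := by
  unfold ss
  have hc : ((2*n - k : ℕ) : ℝ) = 2*n - k := by push_cast [Nat.cast_sub hk]; ring
  rw [hc]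
  by_cases hn : n = 0
  · subst hn; norm_num
  have : (2*(n:ℝ) - k) * Real.pi / (2*n) = Real.pi - k * Real.pi / (2*n) := by
    have hne : (n:ℝ) ≠ 0 := Nat.cast_ne_zero.2 hn
    field_simp
  rw [this, Real.sin_pi_sub]

private lemma s_half (n : ℕ) (hn : 1 ≤ n) : ss n n = 1 := by
  unfold ss
  have : (n:ℝ) * Real.pi / (2*n) = Real.pi / 2 := by
    have : (n:ℝ) ≠ 0 := Nat.cast_ne_zero.2 (by omega)
    field_simp
  rw [this, Real.sin_pi_div_two]

private lemma s_shift (n ℓ : ℕ) (hn : 1 ≤ n) :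
    ss n (n + ℓ) = Real.cos ((ℓ:ℝ) * Real.pi / (2*n)) := by
  unfold ss
  have hne : (n:ℝ) ≠ 0 := Nat.cast_ne_zero.2 (by omega)
  have : ((n + ℓ : ℕ) : ℝ) * Real.pi / (2*n) = Real.pi/2 + ℓ * Real.pi / (2*n) := by
    push_cast; field_simp
  rw [this, Real.sin_add, Real.sin_pi_div_two, Real.cos_pi_div_two]
  ring

private lemma factor_lt (n ℓ j : ℕ) (h : j < ℓ) :
    Real.cos ((ℓ:ℝ) * Real.pi / n) - Real.cos ((j:ℝ) * Real.pi / n)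
      = -2 * ss n (ℓ + j) * ss n (ℓ - j) := by
  unfold ss
  rw [Real.cos_sub_cos]
  have e1 : ((ℓ:ℝ) * Real.pi / n + (j:ℝ) * Real.pi / n) / 2 = ((ℓ + j : ℕ):ℝ) * Real.pi / (2*n) := by
    push_cast; ring
  have e2 : ((ℓ:ℝ) * Real.pi / n - (j:ℝ) * Real.pi / n) / 2 = ((ℓ - j : ℕ):ℝ) * Real.pi / (2*n) := by
    rw [Nat.cast_sub h.le]; ring
  rw [e1, e2]

private lemma factor_gt (n ℓ j : ℕ) (h : ℓ < j) :
    Real.cos ((ℓ:ℝ) * Real.pi / n) - Real.cos ((j:ℝ) * Real.pi / n)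
      = 2 * ss n (ℓ + j) * ss n (j - ℓ) := by
  unfold ss
  rw [Real.cos_sub_cos]
  have e1 : ((ℓ:ℝ) * Real.pi / n + (j:ℝ) * Real.pi / n) / 2 = ((ℓ + j : ℕ):ℝ) * Real.pi / (2*n) := by
    push_cast; ring
  have e2 : ((ℓ:ℝ) * Real.pi / n - (j:ℝ) * Real.pi / n) / 2 = -(((j - ℓ : ℕ):ℝ) * Real.pi / (2*n)) := by
    rw [Nat.cast_sub h.le]; ring
  rw [e1, e2, Real.sin_neg]
  ring

-- singleton Ioc
private lemma Ioc_succ_self (a : ℕ) : Ioc a (a+1) = {a+1} := by ext x; simp only [mem_Ioc, mem_singleton]; omega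

section Main
-- case ℓ = 0 helper: (∏_{Ioc 0 n} s)^2 = P
private lemma sq_prod (n : ℕ) (hn : 1 ≤ n) :
    (∏ k ∈ Ioc 0 n, ss n k) * (∏ k ∈ Ioc 0 n, ss n k) = ∏ k ∈ Ioc 0 (2*n-1), ss n k := by
  have h1 : ∏ k ∈ Ioc 0 n, ss n k = ∏ k ∈ Ioc 0 (n-1), ss n k := by
    have : n = (n-1) + 1 := by omega
    rw [this, Finset.prod_Ioc_succ_top (by omega), ← this, s_half n hn, mul_one]
  have h2 : ∏ k ∈ Ioc n (2*n-1), ss n k = ∏ k ∈ Ioc 0 (n-1), ss n k := by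
    refine Finset.prod_nbij' (fun k => 2*n - k) (fun k => 2*n - k)
      (fun a ha => by simp at ha ⊢; omega) (fun a ha => by simp at ha ⊢; omega)
      (fun a ha => by simp at ha; omega)
      (fun a ha => by simp at ha; omega)
      (fun a ha => by
        rw [← s_refl n (2*n - a) (by simp at ha; omega)]
        congr 1
        simp at ha; omega)
  have h3 : (∏ k ∈ Ioc 0 (n-1), ss n k) * ∏ k ∈ Ioc (n-1) (2*n-1), ss n k
      = ∏ k ∈ Ioc 0 (2*n-1), ss n k := Finset.prod_Ioc_consecutive _ (by omega) (by omega)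
  have h4 : (∏ k ∈ Ioc (n-1) n, ss n k) * ∏ k ∈ Ioc n (2*n-1), ss n k
      = ∏ k ∈ Ioc (n-1) (2*n-1), ss n k := Finset.prod_Ioc_consecutive _ (by omega) (by omega)
  have h5 : ∏ k ∈ Ioc (n-1) n, ss n k = 1 := by
    have : Ioc (n-1) n = {n} := by ext x; simp; omega
    rw [this, Finset.prod_singleton, s_half n hn]
  rw [h1, ← h3, ← h4, h5, h2]
  ring
end Main

/-- For the Chebyshev points `x_j = cos(jπ/n)`, the inverse Lagrange weight
`W_ℓ = ∏_{j≠ℓ}(x_ℓ − x_j)` equals `(−1)^ℓ·2n/2^{n−1}` for `ℓ = 0, n` and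
`(−1)^ℓ·n/2^{n−1}` otherwise. -/
theorem stmt_6 (n : ℕ) (hn : 1 ≤ n) (ℓ : ℕ) (hℓ : ℓ ≤ n) :
    ∏ j ∈ (Finset.range (n + 1)).erase ℓ,
        (Real.cos (ℓ * Real.pi / n) - Real.cos (j * Real.pi / n)) =
      if ℓ = 0 ∨ ℓ = n then (-1 : ℝ) ^ ℓ * (2 * n) / 2 ^ (n - 1)
      else (-1 : ℝ) ^ ℓ * n / 2 ^ (n - 1) := by
  have hP : ∏ k ∈ Ioc 0 (2*n-1), ss n k = 2*n / 2^(2*n-1) := by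
    apply sP n hn
    have h := sin_prod (2*n) (by omega)
    push_cast at h ⊢
    convert h using 2
  rcases eq_or_ne ℓ 0 with rfl | hℓ0
  · rw [if_pos (Or.inl rfl)]
    have hset : (Finset.range (n + 1)).erase 0 = Ioc 0 n := by
      ext x; simp only [mem_erase, mem_range, mem_Ioc]; omega
    have key : ∀ j ∈ Ioc 0 n,
        Real.cos ((0:ℕ) * Real.pi / n) - Real.cos (j * Real.pi / n) = 2 * ss n j * ss n j := by
      intro j hj
      have h := factor_gt n 0 j (mem_Ioc.1 hj).1
      simpa using h
    rw [Finset.prod_congr hset key, Finset.prod_mul_distrib, Finset.prod_mul_distrib,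
      Finset.prod_const, Nat.card_Ioc, mul_assoc, sq_prod n hn, hP]
    rw [Nat.sub_zero]
    have h2 : (2:ℝ)^(2*n-1) = 2^n * 2^(n-1) := by rw [← pow_add]; congr 1; omega
    rw [h2]
    have : (2:ℝ)^(n-1) ≠ 0 := by positivity
    field_simp
  rcases eq_or_ne ℓ n with heq | hℓn
  · obtain rfl : n = ℓ := heq.symm
    rw [if_pos (Or.inr rfl)]
    have hset : (Finset.range (n + 1)).erase n = Ico 0 n := by
      ext x; simp only [mem_erase, mem_range, mem_Ico]; omega
    have key : ∀ j ∈ Ico 0 n,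
        Real.cos ((n:ℕ) * Real.pi / n) - Real.cos (j * Real.pi / n)
          = -2 * ss n (n + j) * ss n (n - j) := by
      intro j hj
      exact factor_lt n n j (mem_Ico.1 hj).2
    rw [Finset.prod_congr hset key, Finset.prod_mul_distrib, Finset.prod_mul_distrib,
      Finset.prod_const, Nat.card_Ico]
    have hA : ∏ j ∈ Ico 0 n, ss n (n + j) = ∏ k ∈ Ioc (n-1) (2*n-1), ss n k := by
      refine Finset.prod_nbij' (fun j => n + j) (fun k => k - n)
        (fun a ha => by simp at ha ⊢; omega) (fun a ha => by simp at ha ⊢; omega)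
        (fun a ha => by omega)
        (fun a ha => by simp at ha; omega)
        (fun a ha => rfl)
    have hB : ∏ j ∈ Ico 0 n, ss n (n - j) = ∏ k ∈ Ioc 0 n, ss n k := by
      refine Finset.prod_nbij' (fun j => n - j) (fun k => n - k)
        (fun a ha => by simp at ha ⊢; omega) (fun a ha => by simp at ha ⊢; omega)
        (fun a ha => by simp at ha; omega)
        (fun a ha => by simp at ha; omega)
        (fun a ha => rfl)
    have hB2 : ∏ k ∈ Ioc 0 n, ss n k = ∏ k ∈ Ioc 0 (n-1), ss n k := by
      have hh : n = (n-1) + 1 := by omega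
      rw [hh, Finset.prod_Ioc_succ_top (by omega), ← hh, s_half n hn, mul_one]
    have hcons : (∏ k ∈ Ioc 0 (n-1), ss n k) * ∏ k ∈ Ioc (n-1) (2*n-1), ss n k
        = ∏ k ∈ Ioc 0 (2*n-1), ss n k := Finset.prod_Ioc_consecutive _ (by omega) (by omega)
    rw [hA, hB, hB2]
    rw [show (n:ℕ) - 0 = n from by omega]
    have hfin : (∏ k ∈ Ioc (n-1) (2*n-1), ss n k) * ∏ k ∈ Ioc 0 (n-1), ss n k
        = 2*n / 2^(2*n-1) := by rw [mul_comm, hcons, hP]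
    rw [mul_assoc, hfin, neg_pow]
    have h2 : (2:ℝ)^(2*n-1) = 2^n * 2^(n-1) := by rw [← pow_add]; congr 1; omega
    rw [h2]
    have : (2:ℝ)^(n-1) ≠ 0 := by positivity
    field_simp
  -- interior case
  · rw [if_neg (by tauto)]
    have hl1 : 1 ≤ ℓ := by omega
    have hln : ℓ < n := by omega
    have hset : (Finset.range (n + 1)).erase ℓ = Ico 0 ℓ ∪ Ioc ℓ n := by
      ext x; simp only [mem_erase, mem_range, mem_union, mem_Ico, mem_Ioc]; omega
    have hdisj : Disjoint (Ico 0 ℓ) (Ioc ℓ n) := by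
      rw [Finset.disjoint_left]; intro a ha hb; simp at ha hb; omega
    rw [hset, Finset.prod_union hdisj]
    have key1 : ∀ j ∈ Ico 0 ℓ,
        Real.cos ((ℓ:ℕ) * Real.pi / n) - Real.cos (j * Real.pi / n)
          = -2 * ss n (ℓ + j) * ss n (ℓ - j) :=
      fun j hj => factor_lt n ℓ j (mem_Ico.1 hj).2
    have key2 : ∀ j ∈ Ioc ℓ n,
        Real.cos ((ℓ:ℕ) * Real.pi / n) - Real.cos (j * Real.pi / n)
          = 2 * ss n (ℓ + j) * ss n (j - ℓ) :=
      fun j hj => factor_gt n ℓ j (mem_Ioc.1 hj).1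
    rw [Finset.prod_congr rfl key1, Finset.prod_congr rfl key2,
      Finset.prod_mul_distrib, Finset.prod_mul_distrib, Finset.prod_mul_distrib,
      Finset.prod_mul_distrib, Finset.prod_const, Finset.prod_const,
      Nat.card_Ico, Nat.card_Ioc]
    -- reindex the four products
    have hA1 : ∏ j ∈ Ico 0 ℓ, ss n (ℓ + j) = ∏ k ∈ Ioc (ℓ-1) (2*ℓ-1), ss n k := by
      refine Finset.prod_nbij' (fun j => ℓ + j) (fun k => k - ℓ)
        (fun a ha => by simp at ha ⊢; omega) (fun a ha => by simp at ha ⊢; omega)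
        (fun a ha => by omega)
        (fun a ha => by simp at ha; omega)
        (fun a ha => rfl)
    have hB1 : ∏ j ∈ Ico 0 ℓ, ss n (ℓ - j) = ∏ k ∈ Ioc 0 ℓ, ss n k := by
      refine Finset.prod_nbij' (fun j => ℓ - j) (fun k => ℓ - k)
        (fun a ha => by simp at ha ⊢; omega) (fun a ha => by simp at ha ⊢; omega)
        (fun a ha => by simp at ha; omega)
        (fun a ha => by simp at ha; omega)
        (fun a ha => rfl)
    have hA2 : ∏ j ∈ Ioc ℓ n, ss n (ℓ + j) = ∏ k ∈ Ioc (2*ℓ) (ℓ+n), ss n k := by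
      refine Finset.prod_nbij' (fun j => ℓ + j) (fun k => k - ℓ)
        (fun a ha => by simp at ha ⊢; omega) (fun a ha => by simp at ha ⊢; omega)
        (fun a ha => by omega)
        (fun a ha => by simp at ha; omega)
        (fun a ha => rfl)
    have hB2 : ∏ j ∈ Ioc ℓ n, ss n (j - ℓ) = ∏ k ∈ Ioc (n+ℓ-1) (2*n-1), ss n k := by
      have step1 : ∏ j ∈ Ioc ℓ n, ss n (j - ℓ) = ∏ k ∈ Ioc 0 (n-ℓ), ss n k := by
        refine Finset.prod_nbij' (fun j => j - ℓ) (fun k => k + ℓ)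
          (fun a ha => by simp at ha ⊢; omega) (fun a ha => by simp at ha ⊢; omega)
          (fun a ha => by simp at ha; omega)
          (fun a ha => by simp at ha; omega)
          (fun a ha => rfl)
      have step2 : ∏ k ∈ Ioc 0 (n-ℓ), ss n k = ∏ k ∈ Ioc (n+ℓ-1) (2*n-1), ss n k := by
        refine Finset.prod_nbij' (fun k => 2*n - k) (fun k => 2*n - k)
          (fun a ha => by simp at ha ⊢; omega) (fun a ha => by simp at ha ⊢; omega)
          (fun a ha => by simp at ha; omega)
          (fun a ha => by simp at ha; omega)
          (fun a ha => by
            rw [← s_refl n a (by simp at ha; omega)])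
      rw [step1, step2]
    rw [hA1, hB1, hA2, hB2]
    -- now pure interval algebra
    set A1 := ∏ k ∈ Ioc (ℓ-1) (2*ℓ-1), ss n k with hA1d
    set B1 := ∏ k ∈ Ioc 0 ℓ, ss n k with hB1d
    set A2 := ∏ k ∈ Ioc (2*ℓ) (ℓ+n), ss n k with hA2d
    set B2 := ∏ k ∈ Ioc (n+ℓ-1) (2*n-1), ss n k with hB2d
    have e1 : A1 * ss n (2*ℓ) = ∏ k ∈ Ioc (ℓ-1) (2*ℓ), ss n k := by
      rw [hA1d, show 2*ℓ = (2*ℓ-1)+1 from by omega, Finset.prod_Ioc_succ_top (by omega)]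
      congr 2 <;> omega
    have e2 : (∏ k ∈ Ioc (ℓ-1) (2*ℓ), ss n k) * A2 = ∏ k ∈ Ioc (ℓ-1) (ℓ+n), ss n k :=
      Finset.prod_Ioc_consecutive _ (by omega) (by omega)
    have e3 : B1 = (∏ k ∈ Ioc 0 (ℓ-1), ss n k) * ss n ℓ := by
      rw [hB1d, show ℓ = (ℓ-1)+1 from by omega, Finset.prod_Ioc_succ_top (by omega)]
      congr 3 <;> omega
    have e4 : B2 = ss n (n+ℓ) * ∏ k ∈ Ioc (n+ℓ) (2*n-1), ss n k := by
      rw [hB2d, ← Finset.prod_Ioc_consecutive (fun k => ss n k) (show n+ℓ-1 ≤ n+ℓ from by omega) (by omega),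
        show Ioc (n+ℓ-1) (n+ℓ) = {n+ℓ} from by ext x; simp only [mem_Ioc, mem_singleton]; omega,
        Finset.prod_singleton]
    have e5 : (∏ k ∈ Ioc 0 (ℓ-1), ss n k) * (∏ k ∈ Ioc (ℓ-1) (ℓ+n), ss n k)
        * (∏ k ∈ Ioc (ℓ+n) (2*n-1), ss n k) = ∏ k ∈ Ioc 0 (2*n-1), ss n k := by
      rw [Finset.prod_Ioc_consecutive _ (by omega : 0 ≤ ℓ-1) (by omega : ℓ-1 ≤ ℓ+n),
        Finset.prod_Ioc_consecutive _ (by omega : 0 ≤ ℓ+n) (by omega : ℓ+n ≤ 2*n-1)]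
    have htrig : ss n ℓ * ss n (n+ℓ) * 2 = ss n (2*ℓ) := by
      rw [s_shift n ℓ hn]
      unfold ss
      rw [show ((2*ℓ:ℕ):ℝ) * Real.pi / (2*n) = 2 * ((ℓ:ℝ) * Real.pi / (2*n)) from by push_cast; ring,
        Real.sin_two_mul]
      ring
    have hs2 : ss n (2*ℓ) ≠ 0 := by
      unfold ss
      have hpos : (0:ℝ) < ((2*ℓ:ℕ):ℝ) * Real.pi / (2*n) := by
        have : (0:ℝ) < ((2*ℓ:ℕ):ℝ) := by exact_mod_cast Nat.pos_of_ne_zero (by omega)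
        positivity
      have hlt : ((2*ℓ:ℕ):ℝ) * Real.pi / (2*n) < Real.pi := by
        rw [div_lt_iff₀ (by positivity)]
        have h1 : ((2*ℓ:ℕ):ℝ) < 2*n := by exact_mod_cast (by omega : 2*ℓ < 2*n)
        nlinarith [Real.pi_pos]
      exact (Real.sin_pos_of_pos_of_lt_pi hpos hlt).ne'
    have key : (A1 * A2 * B1 * B2) * ss n (2*ℓ)
        = ((2*n / 2^(2*n-1)) / 2) * ss n (2*ℓ) := by
      calc (A1 * A2 * B1 * B2) * ss n (2*ℓ)
          = (A1 * ss n (2*ℓ) * A2) * B1 * B2 := by ring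
        _ = (∏ k ∈ Ioc (ℓ-1) (ℓ+n), ss n k) * ((∏ k ∈ Ioc 0 (ℓ-1), ss n k) * ss n ℓ)
            * (ss n (n+ℓ) * ∏ k ∈ Ioc (n+ℓ) (2*n-1), ss n k) := by rw [e1, e2, e3, e4]
        _ = ((∏ k ∈ Ioc 0 (ℓ-1), ss n k) * (∏ k ∈ Ioc (ℓ-1) (ℓ+n), ss n k)
            * (∏ k ∈ Ioc (ℓ+n) (2*n-1), ss n k)) * (ss n ℓ * ss n (n+ℓ)) := by
              rw [show n+ℓ = ℓ+n from by omega]; ring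
        _ = (2*n / 2^(2*n-1)) * (ss n ℓ * ss n (n+ℓ)) := by rw [e5, hP]
        _ = ((2*n / 2^(2*n-1)) / 2) * (ss n ℓ * ss n (n+ℓ) * 2) := by ring
        _ = ((2*n / 2^(2*n-1)) / 2) * ss n (2*ℓ) := by rw [htrig]
    have hT : A1 * A2 * B1 * B2 = (2*n / 2^(2*n-1)) / 2 := mul_right_cancel₀ hs2 key
    have goal_eq : ((-2:ℝ))^(ℓ-0) * A1 * B1 * ((2:ℝ)^(n-ℓ) * A2 * B2)
        = (-1:ℝ)^ℓ * n / 2^(n-1) := by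
      rw [show ℓ-0 = ℓ from rfl, neg_pow]
      have h2 : (2:ℝ)^ℓ * 2^(n-ℓ) = 2^n := by rw [← pow_add]; congr 1; omega
      have h3 : (2:ℝ)^(2*n-1) = 2^n * 2^(n-1) := by rw [← pow_add]; congr 1; omega
      have h4 : (2:ℝ)^(n-1) ≠ 0 := by positivity
      have h5 : (2:ℝ)^n ≠ 0 := by positivity
      calc ((-1:ℝ))^ℓ * 2^ℓ * A1 * B1 * ((2:ℝ)^(n-ℓ) * A2 * B2)
          = (-1:ℝ)^ℓ * (2^ℓ * 2^(n-ℓ)) * (A1 * A2 * B1 * B2) := by ring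
        _ = (-1:ℝ)^ℓ * 2^n * ((2*n / (2^n * 2^(n-1))) / 2) := by rw [h2, hT, h3]
        _ = (-1:ℝ)^ℓ * n / 2^(n-1) := by field_simp
    exact goal_eq
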